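/- Let g : [0,1] → [0,∞] be a g-generator and let I_g be the g-generated implication. If I_g satisfies the identity principle (IP), i.e. I_g(x,x) = 1 for all x ∈ [0,1], then I_g satisfies the functional equation (IE), i.e. I_g(I_g(y,x), I_g(x,y)) = I_g(x,y) for all x, y ∈ [0,1]. -/

import Mathlib

open Set
open scoped ENNReal

/-- If the g-generated implication `I_g` satisfies the identity
principle (IP), then it satisfies (IE). Here `ginv` is the pseudo-inverse of the
g-generator `g`, and `I_g` uses the conventions `1/0 = ∞` and `∞ * 0 = ∞`
(so that `I 0 y = 1`). -/
theorem stmt_12 (g : ℝ → ℝ≥0∞)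
    (hcont : ContinuousOn g (Icc (0:ℝ) 1))
    (hmono : StrictMonoOn g (Icc (0:ℝ) 1))
    (hg0 : g 0 = 0)
    (ginv : ℝ≥0∞ → ℝ)
    (hginv : ∀ x ∈ Icc (0:ℝ) 1, ginv (g x) = x)
    (hginv' : ∀ t : ℝ≥0∞, g 1 ≤ t → ginv t = 1)
    (I : ℝ → ℝ → ℝ)
    (hI : ∀ x y, I x y = if x = 0 then 1 else ginv ((ENNReal.ofReal x)⁻¹ * g y))
    (hIP : ∀ x ∈ Icc (0:ℝ) 1, I x x = 1) :
    ∀ x ∈ Icc (0:ℝ) 1, ∀ y ∈ Icc (0:ℝ) 1, I (I y x) (I x y) = I x y := by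
  -- surjectivity of g onto [0, g 1]
  have hsurj : ∀ t : ℝ≥0∞, t ≤ g 1 → ∃ s ∈ Icc (0:ℝ) 1, g s = t := by
    intro t ht
    have h := intermediate_value_Icc (by norm_num : (0:ℝ) ≤ 1) hcont
    have hmem : t ∈ Icc (g 0) (g 1) := ⟨hg0 ▸ (zero_le : (0:ℝ≥0∞) ≤ t), ht⟩
    obtain ⟨s, hs, hgs⟩ := h hmem
    exact ⟨s, hs, hgs⟩
  have hlt : ∀ t : ℝ≥0∞, t < g 1 → ginv t ∈ Icc (0:ℝ) 1 ∧ g (ginv t) = t := by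
    intro t ht
    obtain ⟨s, hs, hgs⟩ := hsurj t ht.le
    have hgi : ginv t = s := by rw [← hgs, hginv s hs]
    rw [hgi]; exact ⟨hs, hgs⟩
  have hginvmem : ∀ t : ℝ≥0∞, ginv t ∈ Icc (0:ℝ) 1 := by
    intro t
    rcases lt_or_ge t (g 1) with h | h
    · exact (hlt t h).1
    · rw [hginv' t h]; exact ⟨zero_le_one, le_rfl⟩
  have hImem : ∀ a b : ℝ, I a b ∈ Icc (0:ℝ) 1 := by
    intro a b
    rw [hI]
    split_ifs
    · exact ⟨zero_le_one, le_rfl⟩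
    · exact hginvmem _
  have hIPcond : ∀ z ∈ Icc (0:ℝ) 1, z ≠ 0 → g 1 ≤ (ENNReal.ofReal z)⁻¹ * g z := by
    intro z hz hz0
    by_contra h
    push_neg at h
    obtain ⟨hmem, hgv⟩ := hlt _ h
    have h1 : I z z = 1 := hIP z hz
    rw [hI, if_neg hz0] at h1
    rw [h1] at hgv
    exact h.ne' hgv
  intro x hx y hy
  by_cases hx0 : x = 0
  · subst hx0
    rw [hI 0 y, if_pos rfl]
    by_cases hy0 : y = 0
    · subst hy0
      rw [hI 0 0, if_pos rfl]
      exact hIP 1 ⟨zero_le_one, le_rfl⟩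
    · have hy00 : I y 0 = 0 := by
        rw [hI, if_neg hy0, hg0, mul_zero, ← hg0,
          hginv 0 ⟨le_rfl, zero_le_one⟩]
      rw [hy00, hI, if_pos rfl]
  · rw [hI x y, if_neg hx0]
    by_cases ht : g 1 ≤ (ENNReal.ofReal x)⁻¹ * g y
    · rw [hginv' _ ht]
      by_cases hv0 : I y x = 0
      · rw [hI, if_pos hv0]
      · rw [hI, if_neg hv0]
        apply hginv'
        have hv1 : ENNReal.ofReal (I y x) ≤ 1 := ENNReal.ofReal_le_one.2 (hImem y x).2
        have hinv1 : (1:ℝ≥0∞) ≤ (ENNReal.ofReal (I y x))⁻¹ := ENNReal.one_le_inv.2 hv1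
        calc g 1 = 1 * g 1 := (one_mul _).symm
          _ ≤ (ENNReal.ofReal (I y x))⁻¹ * g 1 := mul_le_mul_of_nonneg_right hinv1 (by simp)
    · push_neg at ht
      by_cases hy0 : y = 0
      · subst hy0
        have h0 : ginv ((ENNReal.ofReal x)⁻¹ * g 0) = 0 := by
          rw [hg0, mul_zero, ← hg0, hginv 0 ⟨le_rfl, zero_le_one⟩]
        rw [h0, hI 0, if_pos rfl, hI 1 0, if_neg one_ne_zero, hg0, mul_zero,
          ← hg0, hginv 0 ⟨le_rfl, zero_le_one⟩]
      · have hxy : (ENNReal.ofReal x)⁻¹ ≤ (ENNReal.ofReal y)⁻¹ := by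
          by_contra h
          push_neg at h
          have h2 : (ENNReal.ofReal y)⁻¹ * g y ≤ (ENNReal.ofReal x)⁻¹ * g y :=
            mul_le_mul_of_nonneg_right h.le (by simp)
          exact absurd (lt_of_le_of_lt (le_trans (hIPcond y hy hy0) h2) ht)
            (lt_irrefl _)
        have hv1 : I y x = 1 := by
          rw [hI, if_neg hy0]
          exact hginv' _ (le_trans (hIPcond x hx hx0) (mul_le_mul_of_nonneg_right hxy (by simp : (0:ℝ≥0∞) ≤ g x)))
        rw [hv1, hI, if_neg one_ne_zero, ENNReal.ofReal_one, inv_one, one_mul,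
          hginv _ (hlt _ ht).1]
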